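/- Let c > 0 be a constant and let ρ, v, q : ℝ × ℝ → ℝ be 1-periodic in u, with ρ of class C² and v, q continuous (v of class C¹). Then ρ satisfies the advection–diffusion equation ∂_t ρ + ρ (∂_s α − κ β) = c ∂_s(∂_s ρ) − ∂_s(v ρ) + q at every (t,u) if and only if for every t and all 0 ≤ u₁ ≤ u₂ ≤ 1 the segment mass m(t) := ∫_{u₁}^{u₂} ρ(t,u) g(t,u) du satisfies the balance law d/dt m(t) = −[ −c (1/g) ∂_u ρ + v ρ ]_{u=u₁}^{u=u₂} + ∫_{u₁}^{u₂} q(t,u) g(t,u) du. -/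

import Mathlib

open Real MeasureTheory Function RealInnerProductSpace

local notation "E3" => EuclideanSpace ℝ (Fin 3)

open Metric

section AuxHelpers
variable {E : Type*} [NormedAddCommGroup E] [NormedSpace ℝ E]

private lemma hd_snd' {f : ℝ → ℝ → E} (hf : Differentiable ℝ (uncurry f)) (t u : ℝ) :
    HasDerivAt (fun w => f t w) (fderiv ℝ (uncurry f) (t, u) (0, 1)) u := by
  have h1 : HasDerivAt (fun w : ℝ => ((t, w) : ℝ × ℝ)) ((0 : ℝ), (1 : ℝ)) u :=
    HasDerivAt.prodMk (hasDerivAt_const u t) (hasDerivAt_id u)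
  exact (hf (t, u)).hasFDerivAt.comp_hasDerivAt u h1

private lemma hd_fst' {f : ℝ → ℝ → E} (hf : Differentiable ℝ (uncurry f)) (t u : ℝ) :
    HasDerivAt (fun s => f s u) (fderiv ℝ (uncurry f) (t, u) (1, 0)) t := by
  have h1 : HasDerivAt (fun s : ℝ => ((s, u) : ℝ × ℝ)) ((1 : ℝ), (0 : ℝ)) t :=
    HasDerivAt.prodMk (hasDerivAt_id t) (hasDerivAt_const t u)
  exact (hf (t, u)).hasFDerivAt.comp_hasDerivAt t h1

private lemma per_of_hasDerivAt' {f d : ℝ → E} (hper : ∀ x, f (x + 1) = f x)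
    (hd : ∀ x, HasDerivAt f (d x) x) (u : ℝ) : d (u + 1) = d u := by
  have h1 : HasDerivAt (fun w => f (w + 1)) ((1 : ℝ) • d (u + 1)) u :=
    (hd (u + 1)).scomp u ((hasDerivAt_id u).add_const 1)
  rw [one_smul] at h1
  rw [show (fun w => f (w + 1)) = f from funext hper] at h1
  exact h1.unique (hd u)

private lemma periodic_deriv_aux' {f : ℝ → E} (h : ∀ x, f (x + 1) = f x) (x : ℝ) :
    deriv f (x + 1) = deriv f x := by
  have h1 : deriv (fun y => f (y + 1)) x = deriv f (x + 1) := deriv_comp_add_const ..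
  rw [show (fun y => f (y + 1)) = f from funext h] at h1
  exact h1.symm

end AuxHelpers

private lemma hasDerivAt_intInt_of_cont
    {F G : ℝ → ℝ → ℝ} (hF : Continuous (uncurry F)) (hG : Continuous (uncurry G))
    (hd : ∀ s u, HasDerivAt (fun s' => F s' u) (G s u) s)
    (t a b : ℝ) :
    HasDerivAt (fun s => ∫ u in a..b, F s u) (∫ u in a..b, G t u) t := by
  obtain ⟨M, hM⟩ : ∃ M, ∀ p ∈ (Set.Icc (t-1) (t+1) ×ˢ Set.uIcc a b), ‖uncurry G p‖ ≤ M :=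
    (isCompact_Icc.prod isCompact_uIcc).exists_bound_of_continuousOn hG.continuousOn
  have := (intervalIntegral.hasDerivAt_integral_of_dominated_loc_of_deriv_le
    (F := F) (F' := G) (x₀ := t) (bound := fun _ => M) (a := a) (b := b) (μ := volume)
    (s := Metric.ball t 1) (Metric.ball_mem_nhds t one_pos)
    (Filter.Eventually.of_forall fun s =>
      ((hF.comp (continuous_const.prodMk continuous_id)).aestronglyMeasurable))
    ((hF.comp (continuous_const.prodMk continuous_id)).intervalIntegrable a b)
    ((hG.comp (continuous_const.prodMk continuous_id)).aestronglyMeasurable)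
    (Filter.Eventually.of_forall fun u hu s hs => ?_)
    (intervalIntegrable_const)
    (Filter.Eventually.of_forall fun u _ s _ => hd s u)).2
  · exact this
  · exact hM (s, u) ⟨by
      have : |s - t| < 1 := by simpa [Real.dist_eq] using hs
      constructor <;> [linarith [abs_sub_lt_iff.mp this]; linarith [abs_sub_lt_iff.mp this]]
      , Set.uIoc_subset_uIcc hu⟩

private lemma zero_of_integral_subinterval_zero {h : ℝ → ℝ} (hc : Continuous h)
    (hper : ∀ x, h (x + 1) = h x)
    (hint : ∀ u₁ u₂ : ℝ, 0 ≤ u₁ → u₁ ≤ u₂ → u₂ ≤ 1 → (∫ u in u₁..u₂, h u) = 0) :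
    ∀ u, h u = 0 := by
  have hIoo : ∀ x ∈ Set.Ioo (0:ℝ) 1, h x = 0 := by
    intro x hx
    have hG : HasDerivAt (fun a => ∫ u in (0:ℝ)..a, h u) (h x) x :=
      intervalIntegral.integral_hasDerivAt_right (hc.intervalIntegrable 0 x)
        (hc.stronglyMeasurableAtFilter _ _) hc.continuousAt
    have hG0 : HasDerivAt (fun a => ∫ u in (0:ℝ)..a, h u) 0 x := by
      apply (hasDerivAt_const x (0:ℝ)).congr_of_eventuallyEq
      filter_upwards [Ioo_mem_nhds hx.1 hx.2] with a ha
      exact hint 0 a le_rfl ha.1.le ha.2.le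
    exact hG.unique hG0
  have hIcc : ∀ x ∈ Set.Icc (0:ℝ) 1, h x = 0 := by
    have hclosed : IsClosed {x : ℝ | h x = 0} := isClosed_eq hc continuous_const
    have hsub : Set.Icc (0:ℝ) 1 ⊆ {x | h x = 0} := by
      rw [← closure_Ioo (by norm_num : (0:ℝ) ≠ 1)]
      exact hclosed.closure_subset_iff.mpr hIoo
    exact fun x hx => hsub hx
  intro u
  have hper' : Function.Periodic h 1 := hper
  have h1 : h u = h (Int.fract u) := by
    have h2 := hper'.sub_int_mul_eq (x := u) ⌊u⌋
    rw [mul_one] at h2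
    rw [← h2]; rfl
  rw [h1]
  exact hIcc _ ⟨Int.fract_nonneg u, (Int.fract_lt_one u).le⟩

private lemma g_deriv_aux (X Xu : ℝ → ℝ → E3)
    (g κ α αu β γ : ℝ → ℝ → ℝ)
    (T N B : ℝ → ℝ → E3)
    (hX2 : ContDiff ℝ 2 (uncurry X))
    (hXu : ∀ t u, HasDerivAt (fun w => X t w) (Xu t u) u)
    (hg : ∀ t u, g t u = ‖Xu t u‖)
    (hgpos : ∀ t u, 0 < g t u)
    (hT : ∀ t u, T t u = (g t u)⁻¹ • Xu t u)
    (hN1 : ContDiff ℝ 1 (uncurry N))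
    (hB1 : ContDiff ℝ 1 (uncurry B))
    (hNnorm : ∀ t u, ‖N t u‖ = 1)
    (hTN : ∀ t u, ⟪T t u, N t u⟫ = 0)
    (hTB : ∀ t u, ⟪T t u, B t u⟫ = 0)
    (hNB : ∀ t u, ⟪N t u, B t u⟫ = 0)
    (hFrenet : ∀ t u, HasDerivAt (fun w => T t w) ((g t u * κ t u) • N t u) u)
    (hβ1 : ContDiff ℝ 1 (uncurry β))
    (hγ1 : ContDiff ℝ 1 (uncurry γ))
    (hαu : ∀ t u, HasDerivAt (fun w => α t w) (αu t u) u)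
    (hevol : ∀ t u, HasDerivAt (fun s => X s u)
      (β t u • N t u + γ t u • B t u + α t u • T t u) t)
    (hgC : ContDiff ℝ 1 (uncurry g)) :
    ∀ t u, HasDerivAt (fun s => g s u)
      (αu t u - g t u * κ t u * β t u) t := by
  intro t u
  have hgne : ∀ t u, g t u ≠ 0 := fun t u => (hgpos t u).ne'
  have hXd : Differentiable ℝ (uncurry X) := hX2.differentiable (by norm_num)
  have hF1 : ContDiff ℝ 1 (fderiv ℝ (uncurry X)) := hX2.fderiv_right (by norm_num)
  have hFd : Differentiable ℝ (fderiv ℝ (uncurry X)) := hF1.differentiable one_ne_zero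
  have hXu_eq : ∀ t u, Xu t u = fderiv ℝ (uncurry X) (t, u) (0, 1) :=
    fun t u => (hXu t u).unique (hd_snd' hXd t u)
  have hFfst : ∀ t u, HasDerivAt (fun s => fderiv ℝ (uncurry X) (s, u))
      (fderiv ℝ (fderiv ℝ (uncurry X)) (t, u) (1, 0)) t := by
    intro t u
    exact hd_fst' (f := fun a b => fderiv ℝ (uncurry X) (a, b)) hFd t u
  have hFsnd : ∀ t u, HasDerivAt (fun w => fderiv ℝ (uncurry X) (t, w))
      (fderiv ℝ (fderiv ℝ (uncurry X)) (t, u) (0, 1)) u := by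
    intro t u
    exact hd_snd' (f := fun a b => fderiv ℝ (uncurry X) (a, b)) hFd t u
  set W : E3 := fderiv ℝ (fderiv ℝ (uncurry X)) (t, u) (1, 0) (0, 1) with hW
  have hXut : HasDerivAt (fun s => Xu s u) W t := by
    have h2 := (hFfst t u).clm_apply (hasDerivAt_const t ((0:ℝ), (1:ℝ)))
    simp only [map_zero, add_zero] at h2
    have h3 : (fun s => fderiv ℝ (uncurry X) (s, u) (0, 1)) = fun s => Xu s u :=
      funext fun s => (hXu_eq s u).symm
    rwa [h3] at h2
  have hsymm : W = fderiv ℝ (fderiv ℝ (uncurry X)) (t, u) (0, 1) (1, 0) :=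
    second_derivative_symmetric (fun y => (hXd y).hasFDerivAt)
      ((hFd (t, u)).hasFDerivAt) (1, 0) (0, 1)
  have hXt_eq : ∀ t u, fderiv ℝ (uncurry X) (t, u) (1, 0)
      = β t u • N t u + γ t u • B t u + α t u • T t u :=
    fun t u => (hd_fst' hXd t u).unique (hevol t u)
  have hNd := hd_snd' (hN1.differentiable one_ne_zero) t u
  have hBd := hd_snd' (hB1.differentiable one_ne_zero) t u
  have hβd := hd_snd' (hβ1.differentiable one_ne_zero) t u
  have hγd := hd_snd' (hγ1.differentiable one_ne_zero) t u
  set Nu : E3 := fderiv ℝ (uncurry N) (t, u) (0, 1)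
  set Bu : E3 := fderiv ℝ (uncurry B) (t, u) (0, 1)
  set V : E3 := (β t u • Nu + fderiv ℝ (uncurry β) (t, u) (0, 1) • N t u)
    + (γ t u • Bu + fderiv ℝ (uncurry γ) (t, u) (0, 1) • B t u)
    + (α t u • ((g t u * κ t u) • N t u) + αu t u • T t u) with hV
  have hvel : HasDerivAt (fun w => β t w • N t w + γ t w • B t w + α t w • T t w) V u :=
    ((hβd.smul hNd).add (hγd.smul hBd)).add ((hαu t u).smul (hFrenet t u))
  have hWV : W = V := by
    rw [hsymm]
    have h2 := (hFsnd t u).clm_apply (hasDerivAt_const u ((1:ℝ), (0:ℝ)))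
    simp only [map_zero, add_zero] at h2
    have h3 : (fun w => fderiv ℝ (uncurry X) (t, w) (1, 0))
        = fun w => β t w • N t w + γ t w • B t w + α t w • T t w :=
      funext fun w => hXt_eq t w
    rw [h3] at h2
    exact h2.unique hvel
  have hXuXu : ⟪Xu t u, Xu t u⟫ = g t u ^ 2 := by
    rw [real_inner_self_eq_norm_sq, ← hg]
  have hTT : ⟪T t u, T t u⟫ = 1 := by
    rw [hT, real_inner_smul_left, real_inner_smul_right, hXuXu]
    field_simp
    rw [div_self (hgne t u)]
  have hNN : ⟪N t u, N t u⟫ = 1 := by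
    rw [real_inner_self_eq_norm_sq, hNnorm]; norm_num
  have hTNu : ⟪T t u, Nu⟫ = -(g t u * κ t u) := by
    have hdi := (hFrenet t u).inner ℝ hNd
    have h0 : (fun w => ⟪T t w, N t w⟫) = fun _ => (0:ℝ) := funext (hTN t)
    rw [h0] at hdi
    have := hdi.unique (hasDerivAt_const u (0:ℝ))
    rw [real_inner_smul_left, hNN, mul_one] at this
    linarith
  have hTBu : ⟪T t u, Bu⟫ = 0 := by
    have hdi := (hFrenet t u).inner ℝ hBd
    have h0 : (fun w => ⟪T t w, B t w⟫) = fun _ => (0:ℝ) := funext (hTB t)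
    rw [h0] at hdi
    have := hdi.unique (hasDerivAt_const u (0:ℝ))
    rw [real_inner_smul_left, hNB, mul_zero] at this
    linarith
  have hTV : ⟪T t u, V⟫ = αu t u - g t u * κ t u * β t u := by
    rw [hV]
    simp only [inner_add_right, real_inner_smul_right]
    rw [hTN, hTNu, hTB, hTBu, hTT]
    ring
  have hgd := hd_fst' (hgC.differentiable one_ne_zero) t u
  set gt : ℝ := fderiv ℝ (uncurry g) (t, u) (1, 0) with hgt
  have hsq1 : HasDerivAt (fun s => g s u ^ 2) (2 * g t u ^ 1 * gt) t := by
    simpa using hgd.fun_pow 2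
  have hsq2 : HasDerivAt (fun s => g s u ^ 2) (⟪Xu t u, W⟫ + ⟪W, Xu t u⟫) t := by
    have hin := hXut.inner ℝ hXut
    have heq : (fun s => ⟪Xu s u, Xu s u⟫) = fun s => g s u ^ 2 :=
      funext fun s => by rw [real_inner_self_eq_norm_sq, ← hg]
    rwa [heq] at hin
  have hkey : 2 * g t u ^ 1 * gt = ⟪Xu t u, W⟫ + ⟪W, Xu t u⟫ := hsq1.unique hsq2
  have hXuT : Xu t u = g t u • T t u := by
    rw [hT, smul_smul, mul_inv_cancel₀ (hgne t u), one_smul]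
  have hXuW : ⟪Xu t u, W⟫ = g t u * (αu t u - g t u * κ t u * β t u) := by
    rw [hXuT, real_inner_smul_left, hWV, hTV]
  have hWXu : ⟪W, Xu t u⟫ = g t u * (αu t u - g t u * κ t u * β t u) := by
    rw [real_inner_comm]; exact hXuW
  rw [hXuW, hWXu, pow_one] at hkey
  have hgtval : gt = αu t u - g t u * κ t u * β t u := by
    have h2 : 2 * g t u * gt = 2 * g t u * (αu t u - g t u * κ t u * β t u) := by linarith
    exact mul_left_cancel₀ (by have := hgpos t u; positivity) h2
  rw [← hgtval]
  exact hgd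
/-- Context: an evolving family of closed space curves `Γ_t` parameterized by `X t u`,
with local length `g = ‖∂_u X‖ > 0`, unit tangent `T = g⁻¹ • ∂_u X`, Frenet-type frame
`(T, N, B)`, curvature `κ` (with `∂_u T = g κ N`), evolving by
`∂_t X = β N + γ B + α T`, and total length `L t = ∫₀¹ g t u du`. -/
theorem advection_diffusion_iff_balance_law
    (X Xu : ℝ → ℝ → E3)
    (g κ α αu β γ : ℝ → ℝ → ℝ)
    (T N B : ℝ → ℝ → E3)
    (L : ℝ → ℝ)
    (hX2 : ContDiff ℝ 2 (uncurry X))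
    (hXper : ∀ t u, X t (u + 1) = X t u)
    (hXu : ∀ t u, HasDerivAt (fun w => X t w) (Xu t u) u)
    (hg : ∀ t u, g t u = ‖Xu t u‖)
    (hgpos : ∀ t u, 0 < g t u)
    (hT : ∀ t u, T t u = (g t u)⁻¹ • Xu t u)
    (hN1 : ContDiff ℝ 1 (uncurry N))
    (hB1 : ContDiff ℝ 1 (uncurry B))
    (hNper : ∀ t u, N t (u + 1) = N t u)
    (hBper : ∀ t u, B t (u + 1) = B t u)
    (hNnorm : ∀ t u, ‖N t u‖ = 1)
    (hBnorm : ∀ t u, ‖B t u‖ = 1)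
    (hTN : ∀ t u, ⟪T t u, N t u⟫ = 0)
    (hTB : ∀ t u, ⟪T t u, B t u⟫ = 0)
    (hNB : ∀ t u, ⟪N t u, B t u⟫ = 0)
    (hκc : Continuous (uncurry κ))
    (hFrenet : ∀ t u, HasDerivAt (fun w => T t w) ((g t u * κ t u) • N t u) u)
    (hα1 : ContDiff ℝ 1 (uncurry α))
    (hβ1 : ContDiff ℝ 1 (uncurry β))
    (hγ1 : ContDiff ℝ 1 (uncurry γ))
    (hαper : ∀ t u, α t (u + 1) = α t u)
    (hβper : ∀ t u, β t (u + 1) = β t u)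
    (hγper : ∀ t u, γ t (u + 1) = γ t u)
    (hαu : ∀ t u, HasDerivAt (fun w => α t w) (αu t u) u)
    (hevol : ∀ t u, HasDerivAt (fun s => X s u)
      (β t u • N t u + γ t u • B t u + α t u • T t u) t)
    (hL : ∀ t, L t = ∫ u in (0:ℝ)..1, g t u)

    (c : ℝ) (hc : 0 < c)
    (ρ v q : ℝ → ℝ → ℝ)
    (hρ2 : ContDiff ℝ 2 (uncurry ρ))
    (hv1 : ContDiff ℝ 1 (uncurry v))
    (hqc : Continuous (uncurry q))
    (hρper : ∀ t u, ρ t (u + 1) = ρ t u)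
    (hvper : ∀ t u, v t (u + 1) = v t u)
    (hqper : ∀ t u, q t (u + 1) = q t u) :
    (∀ t u : ℝ,
      deriv (fun s => ρ s u) t + ρ t u * ((g t u)⁻¹ * αu t u - κ t u * β t u)
        = c * ((g t u)⁻¹ * deriv (fun w => (g t w)⁻¹ * deriv (fun z => ρ t z) w) u)
          - (g t u)⁻¹ * deriv (fun w => v t w * ρ t w) u + q t u)
    ↔
    (∀ t u₁ u₂ : ℝ, 0 ≤ u₁ → u₁ ≤ u₂ → u₂ ≤ 1 →
      HasDerivAt (fun s => ∫ u in u₁..u₂, ρ s u * g s u)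
        (-((-c * ((g t u₂)⁻¹ * deriv (fun z => ρ t z) u₂) + v t u₂ * ρ t u₂)
            - (-c * ((g t u₁)⁻¹ * deriv (fun z => ρ t z) u₁) + v t u₁ * ρ t u₁))
          + ∫ u in u₁..u₂, q t u * g t u) t) := by
  have hgne : ∀ t u, g t u ≠ 0 := fun t u => (hgpos t u).ne'
  have hXune : ∀ t u, Xu t u ≠ 0 := by
    intro t u
    have h := hgpos t u
    rw [hg] at h
    exact norm_pos_iff.mp h
  have hXd : Differentiable ℝ (uncurry X) := hX2.differentiable (by norm_num)
  have hF1 : ContDiff ℝ 1 (fderiv ℝ (uncurry X)) := hX2.fderiv_right (by norm_num)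
  have hXu_eq : ∀ t u, Xu t u = fderiv ℝ (uncurry X) (t, u) (0, 1) :=
    fun t u => (hXu t u).unique (hd_snd' hXd t u)
  have hXuC : ContDiff ℝ 1 (uncurry Xu) := by
    have heq : uncurry Xu = fun p : ℝ × ℝ => fderiv ℝ (uncurry X) p (0, 1) :=
      funext fun p => hXu_eq p.1 p.2
    rw [heq]
    exact hF1.clm_apply contDiff_const
  have hgC : ContDiff ℝ 1 (uncurry g) := by
    have heq : uncurry g = fun p : ℝ × ℝ => ‖uncurry Xu p‖ := funext fun p => hg p.1 p.2
    rw [heq, contDiff_iff_contDiffAt]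
    intro p
    exact hXuC.contDiffAt.norm ℝ (hXune p.1 p.2)
  have hgt := g_deriv_aux X Xu g κ α αu β γ T N B hX2 hXu hg hgpos hT hN1 hB1 hNnorm
    hTN hTB hNB hFrenet hβ1 hγ1 hαu hevol hgC
  have hρd : Differentiable ℝ (uncurry ρ) := hρ2.differentiable (by norm_num)
  have hρF1 : ContDiff ℝ 1 (fderiv ℝ (uncurry ρ)) := hρ2.fderiv_right (by norm_num)
  have hρt : ∀ t u, HasDerivAt (fun s => ρ s u) (fderiv ℝ (uncurry ρ) (t, u) (1, 0)) t :=
    hd_fst' hρd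
  have hρtc : Continuous (fun p : ℝ × ℝ => fderiv ℝ (uncurry ρ) p (1, 0)) :=
    (hρF1.clm_apply contDiff_const).continuous
  have hαuc : Continuous (uncurry αu) := by
    have heq : uncurry αu = fun p : ℝ × ℝ => fderiv ℝ (uncurry α) p (0, 1) :=
      funext fun p => (hαu p.1 p.2).unique (hd_snd' (hα1.differentiable one_ne_zero) p.1 p.2)
    rw [heq]
    exact ((hα1.fderiv_right (m := 0) (by norm_num)).clm_apply contDiff_const).continuous
  have hgcont : Continuous (uncurry g) := hgC.continuous
  have hGc : Continuous (fun p : ℝ × ℝ => fderiv ℝ (uncurry ρ) p (1, 0) * g p.1 p.2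
      + ρ p.1 p.2 * (αu p.1 p.2 - g p.1 p.2 * κ p.1 p.2 * β p.1 p.2)) :=
    (hρtc.mul hgcont).add
      ((hρ2.continuous).mul (hαuc.sub ((hgcont.mul hκc).mul hβ1.continuous)))
  have hFc : Continuous (fun p : ℝ × ℝ => ρ p.1 p.2 * g p.1 p.2) :=
    hρ2.continuous.mul hgcont
  have hmassd : ∀ s u', HasDerivAt (fun s' => ρ s' u' * g s' u')
      (fderiv ℝ (uncurry ρ) (s, u') (1, 0) * g s u'
        + ρ s u' * (αu s u' - g s u' * κ s u' * β s u')) s :=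
    fun s u' => (hρt s u').mul (hgt s u')
  have key : ∀ t a b, HasDerivAt (fun s => ∫ u in a..b, ρ s u * g s u)
      (∫ u in a..b, (fderiv ℝ (uncurry ρ) (t, u) (1, 0) * g t u
        + ρ t u * (αu t u - g t u * κ t u * β t u))) t :=
    fun t a b => hasDerivAt_intInt_of_cont (F := fun s u => ρ s u * g s u)
      (G := fun s u' => fderiv ℝ (uncurry ρ) (s, u') (1, 0) * g s u'
        + ρ s u' * (αu s u' - g s u' * κ s u' * β s u')) hFc hGc hmassd t a b
  -- regularity in u at fixed t
  have hgtC1 : ∀ t, ContDiff ℝ 1 (fun w => g t w) :=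
    fun t => hgC.comp (contDiff_const.prodMk contDiff_id)
  have hρtC2 : ∀ t, ContDiff ℝ 2 (fun z => ρ t z) :=
    fun t => hρ2.comp (contDiff_const.prodMk contDiff_id)
  have hρuC1 : ∀ t, ContDiff ℝ 1 (deriv (fun z => ρ t z)) := by
    intro t
    have h2 : ContDiff ℝ (1 + 1) (fun z => ρ t z) := by norm_num [hρtC2 t]
    exact (contDiff_succ_iff_deriv.mp h2).2.2
  have hinnerC1 : ∀ t, ContDiff ℝ 1 (fun w => (g t w)⁻¹ * deriv (fun z => ρ t z) w) :=
    fun t => ((hgtC1 t).inv (fun w => hgne t w)).mul (hρuC1 t)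
  have hvρC1 : ∀ t, ContDiff ℝ 1 (fun w => v t w * ρ t w) :=
    fun t => (hv1.comp (contDiff_const.prodMk contDiff_id)).mul ((hρtC2 t).of_le (by norm_num))
  have hφd : ∀ t u, HasDerivAt
      (fun w => -c * ((g t w)⁻¹ * deriv (fun z => ρ t z) w) + v t w * ρ t w)
      (-c * deriv (fun w => (g t w)⁻¹ * deriv (fun z => ρ t z) w) u
        + deriv (fun w => v t w * ρ t w) u) u := by
    intro t u
    exact ((((hinnerC1 t).differentiable one_ne_zero u).hasDerivAt.const_mul (-c)).add
      (((hvρC1 t).differentiable one_ne_zero u).hasDerivAt))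
  have hDc : ∀ t, Continuous (deriv (fun w => (g t w)⁻¹ * deriv (fun z => ρ t z) w)) :=
    fun t => (hinnerC1 t).continuous_deriv le_rfl
  have hEc : ∀ t, Continuous (deriv (fun w => v t w * ρ t w)) :=
    fun t => (hvρC1 t).continuous_deriv le_rfl
  have hqgc : ∀ t, Continuous (fun u => q t u * g t u) :=
    fun t => ((hqc.comp (continuous_const.prodMk continuous_id)).mul
      (hgcont.comp (continuous_const.prodMk continuous_id)))
  have hGtc : ∀ t, Continuous (fun u => fderiv ℝ (uncurry ρ) (t, u) (1, 0) * g t u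
      + ρ t u * (αu t u - g t u * κ t u * β t u)) :=
    fun t => hGc.comp (continuous_const.prodMk continuous_id)
  have hflux : ∀ t a b,
      (∫ u in a..b, (-c * deriv (fun w => (g t w)⁻¹ * deriv (fun z => ρ t z) w) u
          + deriv (fun w => v t w * ρ t w) u))
        = (-c * ((g t b)⁻¹ * deriv (fun z => ρ t z) b) + v t b * ρ t b)
          - (-c * ((g t a)⁻¹ * deriv (fun z => ρ t z) a) + v t a * ρ t a) := by
    intro t a b
    exact intervalIntegral.integral_eq_sub_of_hasDerivAt (fun u _ => hφd t u)
      (((continuous_const.mul (hDc t)).add (hEc t)).intervalIntegrable a b)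
  have hRHSint : ∀ t a b,
      (-((-c * ((g t b)⁻¹ * deriv (fun z => ρ t z) b) + v t b * ρ t b)
          - (-c * ((g t a)⁻¹ * deriv (fun z => ρ t z) a) + v t a * ρ t a))
        + ∫ u in a..b, q t u * g t u)
      = ∫ u in a..b, (c * deriv (fun w => (g t w)⁻¹ * deriv (fun z => ρ t z) w) u
          - deriv (fun w => v t w * ρ t w) u + q t u * g t u) := by
    intro t a b
    have h1 : (∫ u in a..b, (c * deriv (fun w => (g t w)⁻¹ * deriv (fun z => ρ t z) w) u
          - deriv (fun w => v t w * ρ t w) u + q t u * g t u))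
        = (∫ u in a..b, (c * deriv (fun w => (g t w)⁻¹ * deriv (fun z => ρ t z) w) u
          - deriv (fun w => v t w * ρ t w) u)) + ∫ u in a..b, q t u * g t u :=
      intervalIntegral.integral_add
        (((continuous_const.mul (hDc t)).sub (hEc t)).intervalIntegrable a b)
        ((hqgc t).intervalIntegrable a b)
    have h2 : (∫ u in a..b, (c * deriv (fun w => (g t w)⁻¹ * deriv (fun z => ρ t z) w) u
          - deriv (fun w => v t w * ρ t w) u))
        = -(∫ u in a..b, (-c * deriv (fun w => (g t w)⁻¹ * deriv (fun z => ρ t z) w) u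
          + deriv (fun w => v t w * ρ t w) u)) := by
      rw [← intervalIntegral.integral_neg]
      apply intervalIntegral.integral_congr
      intro u _
      ring
    rw [h1, h2, hflux t a b]
  have hbridge : ∀ t u,
      (deriv (fun s => ρ s u) t + ρ t u * ((g t u)⁻¹ * αu t u - κ t u * β t u)
        = c * ((g t u)⁻¹ * deriv (fun w => (g t w)⁻¹ * deriv (fun z => ρ t z) w) u)
          - (g t u)⁻¹ * deriv (fun w => v t w * ρ t w) u + q t u)
      ↔ (fderiv ℝ (uncurry ρ) (t, u) (1, 0) * g t u
            + ρ t u * (αu t u - g t u * κ t u * β t u)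
        = c * deriv (fun w => (g t w)⁻¹ * deriv (fun z => ρ t z) w) u
          - deriv (fun w => v t w * ρ t w) u + q t u * g t u) := by
    intro t u
    rw [(hρt t u).deriv]
    have ha := hgne t u
    constructor <;> intro h <;> field_simp at h ⊢ <;> linarith
  constructor
  · intro hPDE t u₁ u₂ h1 h2 h3
    have hder := key t u₁ u₂
    have heq : (∫ u in u₁..u₂, (fderiv ℝ (uncurry ρ) (t, u) (1, 0) * g t u
        + ρ t u * (αu t u - g t u * κ t u * β t u)))
        = -((-c * ((g t u₂)⁻¹ * deriv (fun z => ρ t z) u₂) + v t u₂ * ρ t u₂)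
            - (-c * ((g t u₁)⁻¹ * deriv (fun z => ρ t z) u₁) + v t u₁ * ρ t u₁))
          + ∫ u in u₁..u₂, q t u * g t u := by
      rw [hRHSint t u₁ u₂]
      apply intervalIntegral.integral_congr
      intro u _
      exact (hbridge t u).mp (hPDE t u)
    rw [← heq]
    exact hder
  · intro hBL t u
    have hIE : ∀ u₁ u₂ : ℝ, 0 ≤ u₁ → u₁ ≤ u₂ → u₂ ≤ 1 →
        (∫ w in u₁..u₂, ((fderiv ℝ (uncurry ρ) (t, w) (1, 0) * g t w
            + ρ t w * (αu t w - g t w * κ t w * β t w))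
          - (c * deriv (fun w' => (g t w')⁻¹ * deriv (fun z => ρ t z) w') w
            - deriv (fun w' => v t w' * ρ t w') w + q t w * g t w))) = 0 := by
      intro u₁ u₂ h1 h2 h3
      have e1 := (key t u₁ u₂).unique (hBL t u₁ u₂ h1 h2 h3)
      rw [hRHSint t u₁ u₂] at e1
      have hint2 : IntervalIntegrable
          (fun w => c * deriv (fun w' => (g t w')⁻¹ * deriv (fun z => ρ t z) w') w
            - deriv (fun w' => v t w' * ρ t w') w + q t w * g t w) volume u₁ u₂ :=
        ((((continuous_const.mul (hDc t)).sub (hEc t)).add (hqgc t))).intervalIntegrable u₁ u₂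
      rw [intervalIntegral.integral_sub ((hGtc t).intervalIntegrable u₁ u₂) hint2, e1,
        sub_self]
    -- periodicity
    have hXuper : ∀ w, Xu t (w + 1) = Xu t w := per_of_hasDerivAt' (hXper t) (hXu t)
    have hgper' : ∀ w, g t (w + 1) = g t w := fun w => by rw [hg, hg, hXuper]
    have hαuper : ∀ w, αu t (w + 1) = αu t w := per_of_hasDerivAt' (hαper t) (hαu t)
    have hTper : ∀ w, T t (w + 1) = T t w := fun w => by rw [hT, hT, hgper', hXuper]
    have hκper : ∀ w, κ t (w + 1) = κ t w := by
      intro w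
      have h1 : (g t (w + 1) * κ t (w + 1)) • N t (w + 1) = (g t w * κ t w) • N t w :=
        per_of_hasDerivAt' hTper (hFrenet t) w
      rw [hNper] at h1
      have hNne : N t w ≠ 0 := fun hcon => by simpa [hcon] using hNnorm t w
      have h3 : g t (w + 1) * κ t (w + 1) = g t w * κ t w := smul_left_injective ℝ hNne h1
      rw [hgper'] at h3
      exact mul_left_cancel₀ (hgne t w) h3
    have hPper : ∀ w, fderiv ℝ (uncurry ρ) (t, w + 1) (1, 0)
        = fderiv ℝ (uncurry ρ) (t, w) (1, 0) := by
      intro w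
      have hfun : (fun s => ρ s (w + 1)) = fun s => ρ s w := funext fun s => hρper s w
      have h1 := hρt t (w + 1)
      rw [hfun] at h1
      exact h1.unique (hρt t w)
    have hρuper : ∀ w, deriv (fun z => ρ t z) (w + 1) = deriv (fun z => ρ t z) w :=
      periodic_deriv_aux' (hρper t)
    have hDper : ∀ w, deriv (fun w' => (g t w')⁻¹ * deriv (fun z => ρ t z) w') (w + 1)
        = deriv (fun w' => (g t w')⁻¹ * deriv (fun z => ρ t z) w') w :=
      periodic_deriv_aux' (fun x => by rw [hgper', hρuper])
    have hEper : ∀ w, deriv (fun w' => v t w' * ρ t w') (w + 1)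
        = deriv (fun w' => v t w' * ρ t w') w :=
      periodic_deriv_aux' (fun x => by rw [hvper, hρper])
    have hzero := zero_of_integral_subinterval_zero
      (h := fun w => (fderiv ℝ (uncurry ρ) (t, w) (1, 0) * g t w
            + ρ t w * (αu t w - g t w * κ t w * β t w))
          - (c * deriv (fun w' => (g t w')⁻¹ * deriv (fun z => ρ t z) w') w
            - deriv (fun w' => v t w' * ρ t w') w + q t w * g t w))
      (((hGtc t).sub (((continuous_const.mul (hDc t)).sub (hEc t)).add (hqgc t))))
      (fun x => by simp only [hPper, hgper', hρper, hαuper, hκper, hβper, hDper, hEper, hqper])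
      hIE
    exact (hbridge t u).mpr (sub_eq_zero.mp (hzero u))
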